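/- Let l be the list (n repeated n+1 times) followed by (2, 3, ..., n−1, 1, n), for n ≥ 4. Then the expressed permutation P = (n, 2, 3, ..., n−1, 1) satisfies HAM(P) = n − 2, and no single-element deletion, insertion, or substitution applied to l yields a list whose expressed permutation P' satisfies HAM(P') > n − 2. -/

import Mathlib

/-- First-occurrence deduplication: keep only the first occurrence of each element. -/
def expressList : List ℕ → List ℕ
  | [] => []
  | a :: l => a :: expressList (l.filter (· ≠ a))
termination_by l => l.length
decreasing_by
  simpa using Nat.lt_succ_of_le ((List.length_filter_le _ _).trans_eq List.length_attach)

/-- `HAM` of a (possibly incomplete) permutation given as a list: the number of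
(1-based) positions `i` holding the element `i`. -/
def hamList (P : List ℕ) : ℕ :=
  (List.range P.length).countP (fun i => decide (P.getD i 0 = i + 1))

/-- The worst-case list: `n` repeated `n + 1` times, then `2, 3, …, n - 1`, then `1, n`. -/
def worstList2 (n : ℕ) : List ℕ :=
  List.replicate (n + 1) n ++ (List.range (n - 2)).map (· + 2) ++ [1, n]

namespace WLaux

def seg (c m : ℕ) : List ℕ := (List.range m).map (· + c)

lemma seg_succ (c m : ℕ) : seg c (m + 1) = c :: seg (c + 1) m := by
  simp only [seg, List.range_succ_eq_map, List.map_cons, List.map_map, Nat.zero_add]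
  congr 1
  apply List.map_congr_left
  intro x _
  simp [Nat.succ_eq_add_one]; omega

lemma mem_seg {a c m : ℕ} : a ∈ seg c m ↔ c ≤ a ∧ a < c + m := by
  simp only [seg, List.mem_map, List.mem_range]
  constructor
  · rintro ⟨x, hx, rfl⟩; omega
  · rintro ⟨h1, h2⟩; exact ⟨a - c, by omega, by omega⟩

def hamFrom : ℕ → List ℕ → ℕ
  | _, [] => 0
  | s, a :: P => (if a = s + 1 then 1 else 0) + hamFrom (s + 1) P

lemma hamFrom_aux (P : List ℕ) : ∀ s : ℕ,
    (List.range P.length).countP (fun i => decide (P.getD i 0 = i + 1 + s)) = hamFrom s P := by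
  induction P with
  | nil => intro s; simp [hamFrom]
  | cons a P ih =>
    intro s
    simp only [List.length_cons, List.range_succ_eq_map, List.countP_cons, List.countP_map,
      hamFrom]
    have h1 : (List.countP ((fun i => decide ((a :: P).getD i 0 = i + 1 + s)) ∘ Nat.succ)
        (List.range P.length)) = hamFrom (s + 1) P := by
      rw [← ih (s + 1)]
      apply List.countP_congr
      intro i _
      simp only [Function.comp_apply, Nat.succ_eq_add_one, List.getD_cons_succ]
      simp only [decide_eq_true_eq]
      omega
    rw [h1]
    simp only [List.getD_cons_zero, decide_eq_true_eq]
    by_cases hc : a = s + 1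
    · rw [if_pos (by omega : a = 0 + 1 + s), if_pos hc]
      omega
    · rw [if_neg (by omega : ¬ a = 0 + 1 + s), if_neg hc]
      omega

lemma hamList_eq_hamFrom (P : List ℕ) : hamList P = hamFrom 0 P := by
  rw [← hamFrom_aux P 0, hamList]

lemma hamFrom_cons (s a : ℕ) (P : List ℕ) :
    hamFrom s (a :: P) = (if a = s + 1 then 1 else 0) + hamFrom (s + 1) P := rfl

lemma hamFrom_le_length (s : ℕ) (P : List ℕ) : hamFrom s P ≤ P.length := by
  induction P generalizing s with
  | nil => simp [hamFrom]
  | cons a P ih =>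
    rw [hamFrom_cons]
    have := ih (s + 1)
    by_cases h : a = s + 1 <;> simp [h, List.length_cons] <;> omega

lemma hamFrom_eq_length {s : ℕ} {P : List ℕ} (h : hamFrom s P = P.length) :
    P = seg (s + 1) P.length := by
  induction P generalizing s with
  | nil => simp [seg]
  | cons a P ih =>
    rw [hamFrom_cons] at h
    have hle := hamFrom_le_length (s + 1) P
    have ha : a = s + 1 := by
      by_contra hne
      simp [hne] at h
      omega
    have h2 : hamFrom (s + 1) P = P.length := by
      simp [ha] at h; omega
    rw [List.length_cons, seg_succ, ha]
    congr 1
    exact ih h2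

lemma hamFrom_append (s : ℕ) (A B : List ℕ) :
    hamFrom s (A ++ B) = hamFrom s A + hamFrom (s + A.length) B := by
  induction A generalizing s with
  | nil => simp [hamFrom]
  | cons a A ih =>
    simp only [List.cons_append, hamFrom_cons, ih (s + 1), List.length_cons]
    rw [show s + (A.length + 1) = s + 1 + A.length by omega]
    omega

lemma hamFrom_seg (s m : ℕ) : hamFrom s (seg (s + 1) m) = m := by
  induction m generalizing s with
  | zero => simp [seg, hamFrom]
  | succ m ih =>
    rw [seg_succ, hamFrom_cons]
    rw [if_pos rfl, ih (s + 1)]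
    omega

lemma filter_attach_eq (b : ℕ) (L : List ℕ) (f : {x // x ∈ L} → Bool)
    (hf : ∀ x h, f ⟨x, h⟩ = decide (x ≠ b)) :
    (L.attach.filter f).unattach = L.filter (· ≠ b) := by
  rw [List.unattach_filter (hf := hf), List.unattach_attach]

lemma mem_expressList {a : ℕ} : ∀ {L : List ℕ}, a ∈ expressList L → a ∈ L := by
  intro L
  induction L using expressList.induct with
  | case1 => simp [expressList]
  | case2 b L ih =>
    rw [filter_attach_eq b L _ (fun _ _ => rfl)] at ih
    rw [expressList]
    intro h
    rcases List.mem_cons.1 h with h | h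
    · simp [h]
    · exact List.mem_cons_of_mem _ (List.mem_of_mem_filter (ih h))

lemma nodup_expressList : ∀ (L : List ℕ), (expressList L).Nodup := by
  intro L
  induction L using expressList.induct with
  | case1 => simp [expressList]
  | case2 b L ih =>
    rw [filter_attach_eq b L _ (fun _ _ => rfl)] at ih
    rw [expressList]
    refine List.nodup_cons.2 ⟨fun h => ?_, ih⟩
    exact absurd (mem_expressList h) (by simp)

lemma expressList_of_nodup : ∀ {L : List ℕ}, L.Nodup → expressList L = L := by
  intro L
  induction L using expressList.induct with
  | case1 => simp [expressList]
  | case2 b L ih =>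
    rw [filter_attach_eq b L _ (fun _ _ => rfl)] at ih
    intro h
    rw [expressList]
    rw [List.nodup_cons] at h
    have hf : L.filter (· ≠ b) = L := by
      apply List.filter_eq_self.2
      intro x hx
      simp only [ne_eq, decide_eq_true_eq]
      exact fun hxb => h.1 (hxb ▸ hx)
    rw [hf] at ih
    rw [hf, ih h.2]

lemma expressList_cons (a : ℕ) (L : List ℕ) :
    expressList (a :: L) = a :: expressList (L.filter (· ≠ a)) := by
  rw [expressList]

lemma length_le_of_subset_Icc {D : List ℕ} (hnd : D.Nodup) {lo hi : ℕ}
    (h : ∀ v ∈ D, lo ≤ v ∧ v ≤ hi) : D.length ≤ hi + 1 - lo := by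
  have h1 : D.toFinset ⊆ Finset.Icc lo hi := by
    intro v hv
    rw [List.mem_toFinset] at hv
    rw [Finset.mem_Icc]
    exact h v hv
  have h2 := Finset.card_le_card h1
  rw [List.toFinset_card_of_nodup hnd] at h2
  simpa [Nat.card_Icc] using h2

lemma main1 {n : ℕ} (hn : 4 ≤ n) (t : List ℕ) (ht : ∀ v ∈ t, 1 ≤ v ∧ v ≤ n) :
    hamList (expressList (n :: t)) ≤ n - 2 := by
  rw [expressList_cons]
  set D := expressList (t.filter (· ≠ n)) with hD
  have hDnd : D.Nodup := nodup_expressList _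
  have hDmem : ∀ v ∈ D, 1 ≤ v ∧ v ≤ n - 1 := by
    intro v hv
    have hv' := mem_expressList hv
    rw [List.mem_filter] at hv'
    have := ht v hv'.1
    have hne : v ≠ n := by simpa using hv'.2
    omega
  have hlen : D.length ≤ n - 1 := by
    have := length_le_of_subset_Icc hDnd hDmem
    omega
  rw [hamList_eq_hamFrom, hamFrom_cons]
  have hne : ¬ (n = 0 + 1) := by omega
  rw [if_neg hne]
  by_contra hlt
  push_neg at hlt
  have hub := hamFrom_le_length (0 + 1) D
  have heq : hamFrom (0 + 1) D = D.length := by omega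
  have hlen' : D.length = n - 1 := by omega
  have hDseg : D = seg (0 + 1 + 1) D.length := hamFrom_eq_length heq
  have hnD : n ∈ D := by
    rw [hDseg, mem_seg]
    omega
  have := hDmem n hnD
  omega

lemma main2 {n : ℕ} (hn : 4 ≤ n) (x : ℕ) (t : List ℕ) (hx1 : 1 ≤ x) (hx2 : x ≤ n)
    (ht : ∀ v ∈ t, 1 ≤ v ∧ v ≤ n) :
    hamList (expressList (x :: n :: t)) ≤ n - 2 := by
  by_cases hxn : x = n
  · subst hxn
    exact main1 hn (x :: t) (by
      intro v hv
      rcases List.mem_cons.1 hv with rfl | hv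
      · omega
      · exact ht v hv)
  · rw [expressList_cons]
    have hfil : (n :: t).filter (· ≠ x) = n :: t.filter (· ≠ x) := by
      simp only [List.filter_cons]
      rw [if_pos]
      simp [Ne.symm hxn]
    rw [hfil, expressList_cons]
    set D := expressList ((t.filter (· ≠ x)).filter (· ≠ n)) with hD
    have hDnd : D.Nodup := nodup_expressList _
    have hDmem : ∀ v ∈ D, 1 ≤ v ∧ v ≤ n - 1 ∧ v ≠ x := by
      intro v hv
      have hv' := mem_expressList hv
      rw [List.mem_filter] at hv'
      have hv'' := hv'.1
      rw [List.mem_filter] at hv''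
      have := ht v hv''.1
      have h1 : v ≠ x := by simpa using hv''.2
      have h2 : v ≠ n := by simpa using hv'.2
      omega
    have hlen : D.length ≤ n - 2 := by
      by_cases hx1' : x = 1
      · subst hx1'
        have := length_le_of_subset_Icc hDnd (lo := 2) (hi := n - 1) (by
          intro v hv
          have := hDmem v hv
          omega)
        omega
      · -- D ⊆ Icc 1 (n-1) erase x
        have h1 : D.toFinset ⊆ (Finset.Icc 1 (n - 1)).erase x := by
          intro v hv
          rw [List.mem_toFinset] at hv
          have := hDmem v hv
          rw [Finset.mem_erase, Finset.mem_Icc]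
          exact ⟨this.2.2, this.1, this.2.1⟩
        have h2 := Finset.card_le_card h1
        rw [List.toFinset_card_of_nodup hDnd] at h2
        have h3 : x ∈ Finset.Icc 1 (n - 1) := by rw [Finset.mem_Icc]; omega
        rw [Finset.card_erase_of_mem h3] at h2
        simp [Nat.card_Icc] at h2
        omega
    rw [hamList_eq_hamFrom, hamFrom_cons, hamFrom_cons]
    have hn2 : ¬ (n = 0 + 1 + 1) := by omega
    rw [if_neg hn2]
    have hub := hamFrom_le_length (0 + 1 + 1) D
    by_cases hx1' : x = 1
    · rw [if_pos (by omega : x = 0 + 1)]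
      by_contra hlt
      push_neg at hlt
      have heq : hamFrom (0 + 1 + 1) D = D.length := by omega
      have hlen' : D.length = n - 2 := by omega
      have hDseg : D = seg (0 + 1 + 1 + 1) D.length := hamFrom_eq_length heq
      have hnD : n ∈ D := by
        rw [hDseg, mem_seg]
        omega
      have := hDmem n hnD
      omega
    · rw [if_neg (by omega : ¬ x = 0 + 1)]
      omega

lemma mem_insertIdx' {x a : ℕ} : ∀ {l : List ℕ} {i : ℕ}, a ∈ l.insertIdx i x → a = x ∨ a ∈ l := by
  intro l
  induction l with
  | nil =>
    intro i h
    cases i with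
    | zero => rw [List.insertIdx_zero] at h; simp at h; exact Or.inl h
    | succ j => rw [List.insertIdx_succ_nil] at h; simp at h
  | cons b l ih =>
    intro i h
    cases i with
    | zero => rw [List.insertIdx_zero] at h; rcases List.mem_cons.1 h with rfl | h
              · exact Or.inl rfl
              · exact Or.inr h
    | succ j =>
      rw [List.insertIdx_succ_cons] at h
      rcases List.mem_cons.1 h with rfl | h
      · exact Or.inr List.mem_cons_self
      · rcases ih h with h' | h'
        · exact Or.inl h'
        · exact Or.inr (List.mem_cons_of_mem _ h')

lemma worst_mem {n : ℕ} (hn : 4 ≤ n) : ∀ v ∈ worstList2 n, 1 ≤ v ∧ v ≤ n := by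
  intro v hv
  simp only [worstList2, List.mem_append, List.mem_replicate, List.mem_map,
    List.mem_range, List.mem_cons, List.mem_singleton] at hv
  rcases hv with (⟨_, rfl⟩ | ⟨x, hx, rfl⟩) | (rfl | rfl | h)
  · omega
  · exact show 1 ≤ x + 2 ∧ x + 2 ≤ n from by omega
  · omega
  · omega
  · simp at h

lemma worst_decomp {n : ℕ} (hn : 4 ≤ n) :
    worstList2 n = n :: n :: (List.replicate (n - 1) n ++ (List.range (n - 2)).map (· + 2) ++ [1, n]) := by
  rw [worstList2]
  have h1 : List.replicate (n + 1) n = n :: n :: List.replicate (n - 1) n := by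
    rw [List.replicate_succ]
    congr 1
    nth_rewrite 1 [show n = (n - 1) + 1 by omega]
    rw [List.replicate_succ]
  rw [h1]
  simp [List.cons_append]

end WLaux

open WLaux in
theorem worstList2_hard (n : ℕ) (hn : 4 ≤ n) :
    expressList (worstList2 n) = n :: ((List.range (n - 2)).map (· + 2) ++ [1]) ∧
    hamList (expressList (worstList2 n)) = n - 2 ∧
    ∀ l' : List ℕ,
      ((∃ i, l' = (worstList2 n).eraseIdx i) ∨
       (∃ i x, 1 ≤ x ∧ x ≤ n ∧ l' = (worstList2 n).insertIdx i x) ∨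
       (∃ i x, 1 ≤ x ∧ x ≤ n ∧ l' = (worstList2 n).set i x)) →
      ¬ (n - 2 < hamList (expressList l')) := by
  have hseg : (List.range (n - 2)).map (· + 2) = seg 2 (n - 2) := rfl
  have hsegmem : ∀ v ∈ seg 2 (n - 2), 2 ≤ v ∧ v ≤ n - 1 := by
    intro v hv
    rw [mem_seg] at hv
    omega
  -- Part 1: expressList (worstList2 n)
  have hpart1 : expressList (worstList2 n) = n :: (seg 2 (n - 2) ++ [1]) := by
    rw [worstList2, hseg]
    have h1 : List.replicate (n + 1) n = n :: List.replicate n n := List.replicate_succ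
    rw [h1, List.cons_append, List.cons_append, expressList_cons]
    congr 1
    have hfil : ((List.replicate n n ++ seg 2 (n - 2) ++ [1, n]).filter (· ≠ n))
        = seg 2 (n - 2) ++ [1] := by
      simp only [List.filter_append]
      have e1 : (List.replicate n n).filter (· ≠ n) = [] := by
        apply List.filter_eq_nil_iff.2
        intro a ha
        rw [List.mem_replicate] at ha
        simp [ha.2]
      have e2 : (seg 2 (n - 2)).filter (· ≠ n) = seg 2 (n - 2) := by
        apply List.filter_eq_self.2
        intro a ha
        have := hsegmem a ha
        simp only [ne_eq, decide_eq_true_eq]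
        omega
      have e3 : ([1, n] : List ℕ).filter (· ≠ n) = [1] := by
        simp only [List.filter_cons, List.filter_nil]
        rw [if_pos (by simp; omega), if_neg (by simp)]
      rw [e1, e2, e3, List.nil_append]
    rw [hfil]
    apply expressList_of_nodup
    rw [List.nodup_append]
    refine ⟨?_, by simp, ?_⟩
    · apply List.Nodup.map
      · intro a b hab
        have : a + 2 = b + 2 := hab
        omega
      · exact List.nodup_range
    · intro a ha
      have := hsegmem a ha
      simp only [List.mem_singleton]
      omega
  -- Part 2: ham value
  have hpart2 : hamList (expressList (worstList2 n)) = n - 2 := by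
    rw [hpart1, hamList_eq_hamFrom, hamFrom_cons, if_neg (by omega)]
    simp only [Nat.zero_add]
    rw [hamFrom_append]
    have h1 : hamFrom 1 (seg 2 (n - 2)) = n - 2 := hamFrom_seg 1 (n - 2)
    have h2 : hamFrom (1 + (seg 2 (n - 2)).length) [1] = 0 := by
      have hl : (seg 2 (n - 2)).length = n - 2 := by simp [seg]
      rw [hl, hamFrom_cons]
      rw [if_neg (by omega)]
      simp [hamFrom]
    rw [h1, h2]
    omega
  refine ⟨by rw [hpart1, hseg], hpart2, ?_⟩
  -- Part 3
  intro l' hl'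
  rw [Nat.not_lt]
  have hdec := worst_decomp hn
  set r : List ℕ := List.replicate (n - 1) n ++ (List.range (n - 2)).map (· + 2) ++ [1, n] with hr
  have hrmem : ∀ v ∈ (n :: r), 1 ≤ v ∧ v ≤ n := by
    intro v hv
    apply worst_mem hn
    rw [hdec]
    exact List.mem_cons_of_mem _ hv
  rcases hl' with ⟨i, rfl⟩ | ⟨i, x, hx1, hx2, rfl⟩ | ⟨i, x, hx1, hx2, rfl⟩
  · -- deletion
    rw [hdec]
    cases i with
    | zero =>
      rw [List.eraseIdx_cons_zero]
      exact main1 hn r (fun v hv => hrmem v (List.mem_cons_of_mem _ hv))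
    | succ j =>
      rw [List.eraseIdx_cons_succ]
      apply main1 hn
      intro v hv
      exact hrmem v ((List.eraseIdx_sublist (n :: r) j).mem hv)
  · -- insertion
    rw [hdec]
    cases i with
    | zero =>
      rw [List.insertIdx_zero]
      exact main2 hn x (n :: r) hx1 hx2 hrmem
    | succ j =>
      rw [List.insertIdx_succ_cons]
      apply main1 hn
      intro v hv
      rcases mem_insertIdx' hv with rfl | hv'
      · omega
      · exact hrmem v hv'
  · -- substitution
    rw [hdec]
    cases i with
    | zero =>
      rw [List.set_cons_zero]
      exact main2 hn x r hx1 hx2 (fun v hv => hrmem v (List.mem_cons_of_mem _ hv))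
    | succ j =>
      rw [List.set_cons_succ]
      apply main1 hn
      intro v hv
      rcases List.mem_or_eq_of_mem_set hv with hv' | rfl
      · exact hrmem v hv'
      · omega
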